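/- Let (T,d,ρ,u) be a plane ℝ-tree and let p be a Borel probability measure on T. If A is a random variable with values in T×[0,1] and law p_L, then almost surely p_→(A) = 0. -/

import Mathlib

open Set MeasureTheory Filter Metric

/-- The metric segment `[[x,y]]` between `x` and `y`. -/
def geoSeg {T : Type*} [MetricSpace T] (x y : T) : Set T :=
  {z | dist x z + dist z y = dist x y}

/-- `(T,d)` is an `ℝ`-tree: it is geodesic (any two points are joined by a geodesic
segment, which is `geoSeg x y`) and loopless (this segment is the unique arc joining
`x` and `y`). -/
structure IsRTree (T : Type*) [MetricSpace T] : Prop where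
  geodesic : ∀ x y : T, ∃ γ : ℝ → T, γ 0 = x ∧ γ (dist x y) = y ∧
    (∀ s ∈ Icc (0:ℝ) (dist x y), ∀ t ∈ Icc (0:ℝ) (dist x y),
      dist (γ s) (γ t) = |s - t|) ∧
    γ '' Icc (0:ℝ) (dist x y) = geoSeg x y
  loopless : ∀ x y : T, ∀ f : ℝ → T, ContinuousOn f (Icc (0:ℝ) 1) →
    InjOn f (Icc (0:ℝ) 1) → f 0 = x → f 1 = y → f '' Icc (0:ℝ) 1 = geoSeg x y

/-- The set of connected components of `T \ {x}`. -/
def comps {T : Type*} [MetricSpace T] (x : T) : Set (Set T) :=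
  {C | ∃ y, y ≠ x ∧ C = connectedComponentIn ({x}ᶜ) y}

/-- A plane `ℝ`-tree structure on the metric space `T`: `T` is a separable complete
`ℝ`-tree with a root and a balanced angle function `u`.  `cca x y` is the closest
common ancestor of `x` and `y`. -/
structure PlaneRTree (T : Type*) [MetricSpace T] where
  sep : TopologicalSpace.SeparableSpace T
  cpl : CompleteSpace T
  tree : IsRTree T
  root : T
  cca : T → T → T
  cca_mem : ∀ x y : T, cca x y ∈ geoSeg root x ∩ geoSeg root y
  cca_max : ∀ x y : T, ∀ z ∈ geoSeg root x ∩ geoSeg root y,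
    dist root z ≤ dist root (cca x y)
  u : T → T → ℝ
  u_mem : ∀ x y : T, u x y ∈ Icc (0:ℝ) 1
  u_root : ∀ x : T, u x root = 0
  u_self : ∀ x : T, u x x = 0
  u_eq_iff : ∀ x y z : T, y ≠ x → z ≠ x →
    (u x y = u x z ↔ connectedComponentIn ({x}ᶜ) y = connectedComponentIn ({x}ᶜ) z)
  balanced : ∀ x y : T, (comps x).ncard = 2 → u x y = 0 ∨ u x y = 1/2

namespace PlaneRTree

variable {T : Type*} [MetricSpace T]

open Classical in
/-- The angle `u(x, (y,w))`: it is `u x y` if `x ≠ y`, and `w` if `x = y`. -/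
noncomputable def ang (P : PlaneRTree T) (x : T) (β : T × ℝ) : ℝ :=
  if x = β.1 then β.2 else P.u x β.1

/-- `α ↷ β` : `α` is at the left of `β`. -/
def leftOf (P : PlaneRTree T) (α β : T × ℝ) : Prop :=
  P.ang (P.cca α.1 β.1) α < P.ang (P.cca α.1 β.1) β

/-- `α → β` : `β` is in front of `α`. -/
def frontOf (P : PlaneRTree T) (α β : T × ℝ) : Prop :=
  α.1 ∈ geoSeg P.root β.1 ∧ P.ang α.1 β = α.2

/-- The contour relation `≺` : `α ≺ β` iff `α ↷ β` or `α → β`. -/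
def precOf (P : PlaneRTree T) (α β : T × ℝ) : Prop :=
  P.leftOf α β ∨ P.frontOf α β

end PlaneRTree

namespace PlaneRTree

variable {T : Type*} [MetricSpace T] [MeasurableSpace T] [BorelSpace T]

/-- The measure `p_L`, product of `p` with Lebesgue measure on `[0,1]`. -/
noncomputable def pL (p : Measure T) : Measure (T × ℝ) :=
  p.prod (volume.restrict (Icc (0:ℝ) 1))

/-- `p_↶(α) = p_L {β : β ↷ α}`, the mass at the left of `α`. -/
noncomputable def pleft (P : PlaneRTree T) (p : Measure T) (α : T × ℝ) : ℝ :=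
  (pL p {β : T × ℝ | P.leftOf β α}).toReal

/-- `p_→(α) = p_L {β : α → β}`, the mass in front of `α`. -/
noncomputable def pfront (P : PlaneRTree T) (p : Measure T) (α : T × ℝ) : ℝ :=
  (pL p {β : T × ℝ | P.frontOf α β}).toReal

/-- `p_↷(α) = p_L {β : α ↷ β}`, the mass at the right of `α`. -/
noncomputable def pright (P : PlaneRTree T) (p : Measure T) (α : T × ℝ) : ℝ :=
  (pL p {β : T × ℝ | P.leftOf α β}).toReal

end PlaneRTree


section RTreeAux

variable {T : Type*} [MetricSpace T]

lemma left_mem_geoSeg (x y : T) : x ∈ geoSeg x y := by simp [geoSeg]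

lemma right_mem_geoSeg (x y : T) : y ∈ geoSeg x y := by simp [geoSeg]

lemma continuousOn_of_iso {γ : ℝ → T} {L : ℝ}
    (hiso : ∀ s ∈ Icc (0:ℝ) L, ∀ t ∈ Icc (0:ℝ) L, dist (γ s) (γ t) = |s - t|) :
    ContinuousOn γ (Icc (0:ℝ) L) := by
  refine LipschitzOnWith.continuousOn (K := 1) ?_
  refine lipschitzOnWith_iff_dist_le_mul.2 fun s hs t ht => ?_
  rw [hiso s hs t ht, Real.dist_eq]
  simp

lemma IsRTree.isPreconnected_geoSeg (h : IsRTree T) (x y : T) :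
    IsPreconnected (geoSeg x y) := by
  obtain ⟨γ, h0, h1, hiso, him⟩ := h.geodesic x y
  rw [← him]
  exact isPreconnected_Icc.image γ (continuousOn_of_iso hiso)

lemma IsRTree.eq_of_mem_geoSeg (h : IsRTree T) {p q x x' : T}
    (hx : x ∈ geoSeg p q) (hx' : x' ∈ geoSeg p q) (hd : dist p x = dist p x') :
    x = x' := by
  obtain ⟨γ, h0, h1, hiso, him⟩ := h.geodesic p q
  rw [← him] at hx hx'
  obtain ⟨s, hs, rfl⟩ := hx
  obtain ⟨s', hs', rfl⟩ := hx'
  have h0mem : (0:ℝ) ∈ Icc (0:ℝ) (dist p q) := ⟨le_refl 0, dist_nonneg⟩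
  have e1 : dist p (γ s) = s := by
    rw [← h0, hiso 0 h0mem s hs, zero_sub, abs_neg, abs_of_nonneg hs.1]
  have e2 : dist p (γ s') = s' := by
    rw [← h0, hiso 0 h0mem s' hs', zero_sub, abs_neg, abs_of_nonneg hs'.1]
  rw [e1, e2] at hd
  rw [hd]

lemma IsRTree.mem_geoSeg_of_ne_comp (h : IsRTree T) {x a b : T}
    (hab : connectedComponentIn ({x}ᶜ : Set T) a ≠ connectedComponentIn ({x}ᶜ : Set T) b) :
    x ∈ geoSeg a b := by
  by_contra hx
  have hsub : geoSeg a b ⊆ ({x}ᶜ : Set T) := fun z hz =>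
    Set.mem_compl_singleton_iff.2 (fun e => hx (e ▸ hz))
  have hA : geoSeg a b ⊆ connectedComponentIn ({x}ᶜ : Set T) a :=
    (h.isPreconnected_geoSeg a b).subset_connectedComponentIn (left_mem_geoSeg a b) hsub
  exact hab (connectedComponentIn_eq (hA (right_mem_geoSeg a b)))

lemma IsRTree.ball_subset_connectedComponentIn (h : IsRTree T) {x y : T} (hy : y ≠ x) :
    Metric.ball y (dist x y) ⊆ connectedComponentIn ({x}ᶜ : Set T) y := by
  intro z hz
  rw [Metric.mem_ball] at hz
  have hsub : geoSeg y z ⊆ ({x}ᶜ : Set T) := by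
    obtain ⟨γ, h0, h1, hiso, him⟩ := h.geodesic y z
    rw [← him]
    rintro w ⟨s, hs, rfl⟩
    have hws : dist y (γ s) = s := by
      rw [← h0, hiso 0 ⟨le_refl 0, dist_nonneg⟩ s hs, zero_sub, abs_neg, abs_of_nonneg hs.1]
    refine Set.mem_compl_singleton_iff.2 fun e => ?_
    rw [e] at hws
    have h2 : dist y x ≤ dist y z := hws ▸ hs.2
    have h3 : dist y z < dist x y := by rw [dist_comm y z]; exact hz
    have h4 : dist y x < dist x y := lt_of_le_of_lt h2 h3
    rw [dist_comm] at h4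
    exact lt_irrefl _ h4
  have hgeo := (h.isPreconnected_geoSeg y z).subset_connectedComponentIn
    (left_mem_geoSeg y z) hsub
  exact hgeo (right_mem_geoSeg y z)

lemma IsRTree.isOpen_connectedComponentIn (h : IsRTree T) (x y : T) :
    IsOpen (connectedComponentIn ({x}ᶜ : Set T) y) := by
  rw [Metric.isOpen_iff]
  intro z hz
  have hzx : z ∈ ({x}ᶜ : Set T) := connectedComponentIn_subset _ _ hz
  have hzx' : z ≠ x := hzx
  refine ⟨dist x z, dist_pos.2 (Ne.symm hzx'), ?_⟩
  have hb := h.ball_subset_connectedComponentIn hzx'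
  exact (connectedComponentIn_eq hz) ▸ hb

/-- The set of points where at least three distinct components branch off. -/
def branchPts (T : Type*) [MetricSpace T] : Set T :=
  {x | ∃ a b c : T,
    connectedComponentIn ({x}ᶜ : Set T) a ≠ connectedComponentIn ({x}ᶜ : Set T) b ∧
    connectedComponentIn ({x}ᶜ : Set T) b ≠ connectedComponentIn ({x}ᶜ : Set T) c ∧
    connectedComponentIn ({x}ᶜ : Set T) a ≠ connectedComponentIn ({x}ᶜ : Set T) c ∧
    a ≠ x ∧ b ≠ x ∧ c ≠ x}

lemma countable_branchPts (h : IsRTree T) [TopologicalSpace.SeparableSpace T] :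
    (branchPts T).Countable := by
  obtain ⟨D, hDc, hDd⟩ := TopologicalSpace.exists_countable_dense T
  have key : branchPts T ⊆
      ⋃ p ∈ D, ⋃ q ∈ D, ⋃ r ∈ D, geoSeg p q ∩ geoSeg q r ∩ geoSeg p r := by
    rintro x ⟨a, b, c, hab, hbc, hac, ha, hb, hc⟩
    obtain ⟨p, hpD, hp⟩ := hDd.exists_mem_open (h.isOpen_connectedComponentIn x a)
      ⟨a, mem_connectedComponentIn (Set.mem_compl_singleton_iff.2 ha)⟩
    obtain ⟨q, hqD, hq⟩ := hDd.exists_mem_open (h.isOpen_connectedComponentIn x b)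
      ⟨b, mem_connectedComponentIn (Set.mem_compl_singleton_iff.2 hb)⟩
    obtain ⟨r, hrD, hr⟩ := hDd.exists_mem_open (h.isOpen_connectedComponentIn x c)
      ⟨c, mem_connectedComponentIn (Set.mem_compl_singleton_iff.2 hc)⟩
    have hpa := connectedComponentIn_eq hp
    have hqb := connectedComponentIn_eq hq
    have hrc := connectedComponentIn_eq hr
    refine Set.mem_biUnion hpD (Set.mem_biUnion hqD (Set.mem_biUnion hrD ?_))
    refine ⟨⟨h.mem_geoSeg_of_ne_comp ?_, h.mem_geoSeg_of_ne_comp ?_⟩,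
      h.mem_geoSeg_of_ne_comp ?_⟩
    · rw [← hpa, ← hqb]; exact hab
    · rw [← hqb, ← hrc]; exact hbc
    · rw [← hpa, ← hrc]; exact hac
  refine Set.Countable.mono key ?_
  refine hDc.biUnion fun p _ => hDc.biUnion fun q _ => hDc.biUnion fun r _ => ?_
  refine Set.Subsingleton.countable ?_
  rintro u ⟨⟨hupq, huqr⟩, hupr⟩ u' ⟨⟨hupq', huqr'⟩, hupr'⟩
  have e1 : dist p u + dist u q = dist p q := hupq
  have e2 : dist q u + dist u r = dist q r := huqr
  have e3 : dist p u + dist u r = dist p r := hupr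
  have e1' : dist p u' + dist u' q = dist p q := hupq'
  have e2' : dist q u' + dist u' r = dist q r := huqr'
  have e3' : dist p u' + dist u' r = dist p r := hupr'
  have dc1 : dist u q = dist q u := dist_comm u q
  have dc1' : dist u' q = dist q u' := dist_comm u' q
  exact h.eq_of_mem_geoSeg hupq hupq' (by linarith)

end RTreeAux

namespace PlaneRTree

section Geometry

variable {T : Type*} [MetricSpace T]

/-- The set of points `y ≠ x` with angle `u x y = v`. -/
def Sv (P : PlaneRTree T) (x : T) (v : ℝ) : Set T := {y | y ≠ x ∧ P.u x y = v}

lemma isOpen_Sv (P : PlaneRTree T) (x : T) (v : ℝ) : IsOpen (P.Sv x v) := by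
  rw [Metric.isOpen_iff]
  rintro y ⟨hyx, hyv⟩
  refine ⟨dist x y, dist_pos.2 (Ne.symm hyx), fun z hz => ?_⟩
  have hz' : z ∈ connectedComponentIn ({x}ᶜ : Set T) y :=
    P.tree.ball_subset_connectedComponentIn hyx hz
  have hzx : z ≠ x := connectedComponentIn_subset _ _ hz'
  refine ⟨hzx, ?_⟩
  rw [← hyv]
  exact (P.u_eq_iff x z y hzx hyx).2 (connectedComponentIn_eq hz').symm

lemma val_mem (P : PlaneRTree T) {x y : T} (hx : x ∉ branchPts T) (hroot : x ≠ P.root)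
    (hyx : y ≠ x) : P.u x y = 0 ∨ P.u x y = 1/2 := by
  have hrx : P.root ≠ x := Ne.symm hroot
  by_cases hc : connectedComponentIn ({x}ᶜ : Set T) y
      = connectedComponentIn ({x}ᶜ : Set T) P.root
  · left
    have huy := (P.u_eq_iff x y P.root hyx hrx).2 hc
    rw [huy, P.u_root]
  · have hcomps : comps x = {connectedComponentIn ({x}ᶜ : Set T) y,
        connectedComponentIn ({x}ᶜ : Set T) P.root} := by
      ext C
      constructor
      · rintro ⟨a, hax, rfl⟩
        by_contra hC
        rw [Set.mem_insert_iff, Set.mem_singleton_iff] at hC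
        push_neg at hC
        exact hx ⟨a, y, P.root, hC.1, hc, hC.2, hax, hyx, hrx⟩
      · rintro (rfl | h)
        · exact ⟨y, hyx, rfl⟩
        · rw [Set.mem_singleton_iff] at h
          exact ⟨P.root, hrx, h⟩
    have h2 : (comps x).ncard = 2 := by
      rw [hcomps]
      exact Set.ncard_pair hc
    exact P.balanced x y h2

end Geometry

section MeasureAux

variable {T : Type*} [MetricSpace T] [MeasurableSpace T] [BorelSpace T]

lemma front_measure_le (P : PlaneRTree T) (p : Measure T) (α : T × ℝ) :
    pL p {β : T × ℝ | P.frontOf α β} ≤ p (P.Sv α.1 α.2) := by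
  have hsub : {β : T × ℝ | P.frontOf α β} ⊆
      ({α.1} ×ˢ ({α.2} : Set ℝ)) ∪ ((P.Sv α.1 α.2) ×ˢ (univ : Set ℝ)) := by
    rintro ⟨y, w⟩ ⟨h1, h2⟩
    by_cases hxy : α.1 = y
    · left
      simp only [ang, if_pos hxy] at h2
      exact ⟨hxy.symm, h2⟩
    · right
      simp only [ang, if_neg hxy] at h2
      exact ⟨⟨fun e => hxy e.symm, h2⟩, trivial⟩
  have h1 : pL p ({α.1} ×ˢ ({α.2} : Set ℝ)) = 0 := by
    rw [pL, Measure.prod_prod]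
    have hv : (volume.restrict (Icc (0:ℝ) 1)) {α.2} = 0 :=
      le_antisymm ((Measure.restrict_apply_le _ _).trans (by simp)) zero_le
    rw [hv, mul_zero]
  have h2 : pL p ((P.Sv α.1 α.2) ×ˢ (univ : Set ℝ)) ≤ p (P.Sv α.1 α.2) := by
    rw [pL, Measure.prod_prod]
    have hu : (volume.restrict (Icc (0:ℝ) 1)) univ ≤ 1 := by
      rw [Measure.restrict_apply_univ]
      simp [Real.volume_Icc]
    calc p (P.Sv α.1 α.2) * (volume.restrict (Icc (0:ℝ) 1)) univ
        ≤ p (P.Sv α.1 α.2) * 1 := mul_le_mul_right hu _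
      _ = p (P.Sv α.1 α.2) := mul_one _
  refine le_trans (measure_mono hsub) (le_trans (measure_union_le _ _) ?_)
  rw [h1, zero_add]
  exact h2

lemma countable_badv (P : PlaneRTree T) (p : Measure T) [IsProbabilityMeasure p] (x : T) :
    {v : ℝ | 0 < p (P.Sv x v)}.Countable :=
  Measure.countable_meas_pos_of_disjoint_iUnion (As := fun v => P.Sv x v)
    (fun v => (P.isOpen_Sv x v).measurableSet)
    (fun _ _ hvv' => Set.disjoint_left.2 fun _ hy hy' => hvv' (hy.2.symm.trans hy'.2))

end MeasureAux

end PlaneRTree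

/-- If `A` is a random variable with law `p_L`, then almost surely `p_→(A) = 0`. -/
theorem pfront_ae_eq_zero {T : Type*} [MetricSpace T]
    [MeasurableSpace T] [BorelSpace T] (P : PlaneRTree T)
    (p : Measure T) [IsProbabilityMeasure p]
    {Ω : Type*} [MeasurableSpace Ω] (μ : Measure Ω) [IsProbabilityMeasure μ]
    (A : Ω → T × ℝ) (hA : Measurable A)
    (hlaw : Measure.map A μ = PlaneRTree.pL p) :
    ∀ᵐ ω ∂μ, P.pfront p (A ω) = 0 := by
  haveI := P.sep
  have hBr : (branchPts T).Countable := countable_branchPts P.tree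
  set C : T → Set ℝ := fun x => {v | 0 < p (P.Sv x v)} with hC
  set E : Set (T × ℝ) := ⋃ x ∈ insert P.root (branchPts T), ({x} ×ˢ C x) with hE
  set N : Set (T × ℝ) := ((univ : Set T) ×ˢ ({0, 1/2} : Set ℝ)) ∪ E with hN
  have hEc : E.Countable :=
    (hBr.insert P.root).biUnion fun x _ =>
      (Set.countable_singleton x).prod (P.countable_badv p x)
  have hNm : MeasurableSet N :=
    (MeasurableSet.univ.prod ((measurableSet_singleton ((1:ℝ)/2)).insert 0)).union
      hEc.measurableSet
  have hN0 : PlaneRTree.pL p N = 0 := by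
    refine measure_union_null ?_ ?_
    · rw [PlaneRTree.pL, Measure.prod_prod]
      have hv : (volume.restrict (Icc (0:ℝ) 1)) ({0, 1/2} : Set ℝ) = 0 :=
        le_antisymm ((Measure.restrict_apply_le _ _).trans
          (le_of_eq (((Set.countable_singleton ((1:ℝ)/2)).insert 0).measure_zero volume)))
          zero_le
      rw [hv, mul_zero]
    · rw [hE, measure_biUnion_null_iff (hBr.insert P.root)]
      intro x _
      rw [PlaneRTree.pL, Measure.prod_prod]
      have hv : (volume.restrict (Icc (0:ℝ) 1)) (C x) = 0 :=
        le_antisymm ((Measure.restrict_apply_le _ _).trans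
          (le_of_eq ((P.countable_badv p x).measure_zero volume))) zero_le
      rw [hv, mul_zero]
  have hsub : {ω | ¬ P.pfront p (A ω) = 0} ⊆ A ⁻¹' N := by
    intro ω hω
    have hne : PlaneRTree.pL p {β : T × ℝ | P.frontOf (A ω) β} ≠ 0 := by
      intro h0
      exact hω (by rw [PlaneRTree.pfront, h0, ENNReal.toReal_zero])
    have hpos : 0 < p (P.Sv (A ω).1 (A ω).2) := by
      refine pos_iff_ne_zero.2 fun h0 => hne ?_
      exact le_antisymm ((P.front_measure_le p (A ω)).trans h0.le) zero_le
    by_cases hx : (A ω).1 = P.root ∨ (A ω).1 ∈ branchPts T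
    · have hxmem : (A ω).1 ∈ insert P.root (branchPts T) := by
        rcases hx with h | h
        · rw [h]; exact Set.mem_insert _ _
        · exact Set.mem_insert_of_mem _ h
      exact Set.mem_union_right _
        (Set.mem_biUnion hxmem (Set.mem_prod.2 ⟨rfl, hpos⟩))
    · push_neg at hx
      obtain ⟨y, hyx, hyv⟩ := nonempty_of_measure_ne_zero hpos.ne'
      have hval := P.val_mem hx.2 hx.1 hyx
      refine Set.mem_union_left _ (Set.mem_prod.2 ⟨trivial, ?_⟩)
      rw [Set.mem_insert_iff, Set.mem_singleton_iff, ← hyv]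
      exact hval
  refine ae_iff.2 (measure_mono_null hsub ?_)
  rw [← Measure.map_apply hA hNm, hlaw]
  exact hN0
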